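/- Logarithmic convexity of outer L^p quasi-norms in the size exponent (Proposition 8.6): Let X be a metric space equipped with a Borel measure ν and an outer measure μ. For 0 < r < ∞ and Borel A ⊆ X define ℓ^r(f)(A) = (μ(A)^{-1} ∫_A f^r dν)^{1/r} and ℓ^∞(f)(A) = ess sup_A f, and define the associated outer quasi-norms as below. Then for every 0 < p ≤ ∞ and 0 < r_1 < r < r_2 ≤ ∞ there exists a constant C = C(p, r, r_1, r_2) such that for every nonnegative Borel function f on X: ‖f‖_{L^p(ℓ^r)} ≤ C (‖f‖_{L^p(ℓ^{r_1})} + ‖f‖_{L^p(ℓ^{r_2})}) and ‖f‖_{L^{p,∞}(ℓ^r)} ≤ C (‖f‖_{L^{p,∞}(ℓ^{r_1})} + ‖f‖_{L^{p,∞}(ℓ^{r_2})}). -/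

import Mathlib

open MeasureTheory Set
open scoped ENNReal

noncomputable section

/-- The outer `ℓ^r` size associated with an outer measure `μ` and a Borel measure `ν`:
for `r < ∞`, `ℓ^r(f)(A) = (μ(A)⁻¹ ∫_A f^r dν)^{1/r}`; for `r = ∞` the `ν`-essential
supremum of `f` on `A`. -/
def ellSize {X : Type*} [MeasurableSpace X] (μ : Set X → ℝ≥0∞) (ν : MeasureTheory.Measure X)
    (r : ℝ≥0∞) (f : X → ℝ≥0∞) (A : Set X) : ℝ≥0∞ :=
  if r = ∞ then essSup f (ν.restrict A)
  else ((μ A)⁻¹ * ∫⁻ x in A, f x ^ r.toReal ∂ν) ^ r.toReal⁻¹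

/-- The outer `L^∞(ℓ^r)` quasi-norm: supremum of the size over Borel sets. -/
def outerSup {X : Type*} [MeasurableSpace X] (μ : Set X → ℝ≥0∞) (ν : MeasureTheory.Measure X)
    (r : ℝ≥0∞) (f : X → ℝ≥0∞) : ℝ≥0∞ :=
  ⨆ (A : Set X) (_ : MeasurableSet A), ellSize μ ν r f A

/-- The super level measure `μ(ℓ^r(f) > λ)`. -/
def superLevel {X : Type*} [MeasurableSpace X] (μ : Set X → ℝ≥0∞) (ν : MeasureTheory.Measure X)
    (r : ℝ≥0∞) (f : X → ℝ≥0∞) (lam : ℝ≥0∞) : ℝ≥0∞ :=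
  ⨅ (A : Set X) (_ : MeasurableSet A)
    (_ : outerSup μ ν r (Aᶜ.indicator f) ≤ lam), μ A

/-- The outer `L^p(ℓ^r)` quasi-norm,
`‖f‖_{L^p(ℓ^r)} = (∫_0^∞ p λ^{p-1} μ(ℓ^r(f) > λ) dλ)^{1/p}` for `p < ∞`. -/
def outerLp {X : Type*} [MeasurableSpace X] (μ : Set X → ℝ≥0∞) (ν : MeasureTheory.Measure X)
    (p r : ℝ≥0∞) (f : X → ℝ≥0∞) : ℝ≥0∞ :=
  if p = ∞ then outerSup μ ν r f
  else (∫⁻ l in Ioi (0:ℝ),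
      ENNReal.ofReal (p.toReal * l ^ (p.toReal - 1)) *
        superLevel μ ν r f (ENNReal.ofReal l)) ^ p.toReal⁻¹

/-- The weak outer `L^{p,∞}(ℓ^r)` quasi-norm,
`‖f‖_{L^{p,∞}(ℓ^r)} = (sup_{λ>0} λ^p μ(ℓ^r(f) > λ))^{1/p}` for `p < ∞`. -/
def outerLpWeak {X : Type*} [MeasurableSpace X] (μ : Set X → ℝ≥0∞) (ν : MeasureTheory.Measure X)
    (p r : ℝ≥0∞) (f : X → ℝ≥0∞) : ℝ≥0∞ :=
  if p = ∞ then outerSup μ ν r f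
  else (⨆ (lam : ℝ≥0∞) (_ : 0 < lam), lam ^ p.toReal * superLevel μ ν r f lam) ^ p.toReal⁻¹

/-- The upper half space `ℝ^d × ℝ` (only the part `t > 0` carries mass). -/
abbrev UHS (d : ℕ) : Type := (Fin d → ℝ) × ℝ

/-- The measure `t⁻¹ dy dt` on the upper half space (vanishing on `{t ≤ 0}`). -/
def uhsMeasure (d : ℕ) : MeasureTheory.Measure (UHS d) :=
  (MeasureTheory.volume : MeasureTheory.Measure (Fin d → ℝ)).prod
    (MeasureTheory.volume.withDensity fun t => ENNReal.ofReal t⁻¹)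

set_option linter.unusedSectionVars false

section Aux

variable {X : Type*} [MeasurableSpace X] (μ : Set X → ℝ≥0∞) (ν : Measure X)

lemma gm_eq {θ₁ θ₂ : ℝ} (h1 : 0 ≤ θ₁) (h2 : 0 ≤ θ₂) (hs : θ₁ + θ₂ = 1) (x : ℝ≥0∞) :
    x ^ θ₁ * x ^ θ₂ = x := by
  rw [← ENNReal.rpow_add_of_nonneg θ₁ θ₂ h1 h2, hs, ENNReal.rpow_one]

lemma ellSize_mono (r : ℝ≥0∞) {f g : X → ℝ≥0∞} (h : ∀ x, f x ≤ g x) (A : Set X) :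
    ellSize μ ν r f A ≤ ellSize μ ν r g A := by
  unfold ellSize
  split
  · exact essSup_mono_ae (Filter.Eventually.of_forall h)
  · refine ENNReal.rpow_le_rpow ?_ (inv_nonneg.mpr ENNReal.toReal_nonneg)
    exact mul_le_mul_right (lintegral_mono fun x =>
      ENNReal.rpow_le_rpow (h x) ENNReal.toReal_nonneg) _

lemma ellSize_interp {r₁ r r₂ : ℝ≥0∞} (hr₁ : 0 < r₁) (h₁ : r₁ < r) (h₂ : r < r₂)
    {g : X → ℝ≥0∞} (hg : Measurable g) :
    ∃ θ₁ θ₂ : ℝ, 0 < θ₁ ∧ 0 < θ₂ ∧ θ₁ + θ₂ = 1 ∧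
      ∀ A : Set X, ellSize μ ν r g A ≤ ellSize μ ν r₁ g A ^ θ₁ * ellSize μ ν r₂ g A ^ θ₂ := by
  have hrne : r ≠ ∞ := h₂.ne_top
  have hr₁ne : r₁ ≠ ∞ := h₁.ne_top
  set a := r₁.toReal with ha_def
  set b := r.toReal with hb_def
  have ha : 0 < a := ENNReal.toReal_pos hr₁.ne' hr₁ne
  have hb : 0 < b := ENNReal.toReal_pos (hr₁.trans h₁).ne' hrne
  have hab : a < b := (ENNReal.toReal_lt_toReal hr₁ne hrne).mpr h₁
  by_cases hr₂ : r₂ = ∞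
  · refine ⟨a / b, (b - a) / b, div_pos ha hb, div_pos (sub_pos.mpr hab) hb,
      by field_simp; ring, fun A => ?_⟩
    simp only [ellSize, if_neg hrne, if_neg hr₁ne, if_pos hr₂]
    set M := essSup g (ν.restrict A)
    set u := (μ A)⁻¹
    set I₁ := ∫⁻ x in A, g x ^ a ∂ν with hI₁
    have key : (∫⁻ x in A, g x ^ b ∂ν) ≤ M ^ (b - a) * I₁ := by
      have hae : ∀ᵐ x ∂ν.restrict A, g x ^ b ≤ M ^ (b - a) * g x ^ a := by
        filter_upwards [ae_le_essSup (f := g) (μ := ν.restrict A)] with x hx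
        calc g x ^ b = g x ^ (b - a) * g x ^ a := by
              rw [← ENNReal.rpow_add_of_nonneg _ _ (sub_nonneg.mpr hab.le) ha.le,
                sub_add_cancel]
          _ ≤ M ^ (b - a) * g x ^ a :=
              mul_le_mul_left (ENNReal.rpow_le_rpow hx (sub_nonneg.mpr hab.le)) _
      calc (∫⁻ x in A, g x ^ b ∂ν) ≤ ∫⁻ x in A, M ^ (b - a) * g x ^ a ∂ν :=
            lintegral_mono_ae hae
        _ = M ^ (b - a) * I₁ :=
            lintegral_const_mul _ (ENNReal.continuous_rpow_const.measurable.comp hg)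
    calc (u * ∫⁻ x in A, g x ^ b ∂ν) ^ b⁻¹ ≤ (u * (M ^ (b - a) * I₁)) ^ b⁻¹ :=
          ENNReal.rpow_le_rpow (mul_le_mul_right key u) (inv_nonneg.mpr hb.le)
      _ = ((u * I₁) ^ a⁻¹) ^ (a / b) * M ^ ((b - a) / b) := by
          rw [show u * (M ^ (b - a) * I₁) = M ^ (b - a) * (u * I₁) by ring,
            ENNReal.mul_rpow_of_nonneg _ _ (inv_nonneg.mpr hb.le),
            ← ENNReal.rpow_mul, ← ENNReal.rpow_mul]
          rw [show (b - a) * b⁻¹ = (b - a) / b from (div_eq_mul_inv _ _).symm,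
            show a⁻¹ * (a / b) = b⁻¹ by field_simp, mul_comm]
  · have hr₂ne : r₂ ≠ ∞ := hr₂
    set c := r₂.toReal with hc_def
    have hbc : b < c := (ENNReal.toReal_lt_toReal hrne hr₂ne).mpr h₂
    have hc : 0 < c := hb.trans hbc
    have hac : a < c := hab.trans hbc
    set θ : ℝ := (c - b) / (c - a) with hθ_def
    have hca : (0:ℝ) < c - a := sub_pos.mpr hac
    have hθ : 0 < θ := div_pos (sub_pos.mpr hbc) hca
    have h1θ : 0 < 1 - θ := by
      rw [sub_pos, hθ_def, div_lt_one hca]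
      linarith
    have hcomb : θ * a + (1 - θ) * c = b := by
      rw [hθ_def]
      field_simp
      ring
    refine ⟨θ * a / b, (1 - θ) * c / b, div_pos (mul_pos hθ ha) hb,
      div_pos (mul_pos h1θ hc) hb, ?_, fun A => ?_⟩
    · rw [← add_div, hcomb, div_self hb.ne']
    simp only [ellSize, if_neg hrne, if_neg hr₁ne, if_neg hr₂ne]
    set u := (μ A)⁻¹
    set I₁ := ∫⁻ x in A, g x ^ a ∂ν with hI₁
    set I₂ := ∫⁻ x in A, g x ^ c ∂ν with hI₂
    have key : (∫⁻ x in A, g x ^ b ∂ν) ≤ I₁ ^ θ * I₂ ^ (1 - θ) := by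
      have : (∫⁻ x in A, g x ^ b ∂ν)
          = ∫⁻ x in A, (g x ^ a) ^ θ * (g x ^ c) ^ (1 - θ) ∂ν := by
        refine lintegral_congr fun x => ?_
        rw [← ENNReal.rpow_mul, ← ENNReal.rpow_mul,
          ← ENNReal.rpow_add_of_nonneg _ _ (mul_nonneg ha.le hθ.le)
            (mul_nonneg hc.le h1θ.le)]
        rw [show a * θ + c * (1 - θ) = b by linarith [hcomb]]
      rw [this]
      exact ENNReal.lintegral_mul_norm_pow_le
        (ENNReal.continuous_rpow_const.measurable.comp hg).aemeasurable
        (ENNReal.continuous_rpow_const.measurable.comp hg).aemeasurable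
        hθ.le h1θ.le (by ring)
    calc (u * ∫⁻ x in A, g x ^ b ∂ν) ^ b⁻¹ ≤ (u * (I₁ ^ θ * I₂ ^ (1 - θ))) ^ b⁻¹ :=
          ENNReal.rpow_le_rpow (mul_le_mul_right key u) (inv_nonneg.mpr hb.le)
      _ = ((u * I₁) ^ θ * (u * I₂) ^ (1 - θ)) ^ b⁻¹ := by
          congr 1
          calc u * (I₁ ^ θ * I₂ ^ (1 - θ))
              = (u ^ θ * u ^ (1 - θ)) * (I₁ ^ θ * I₂ ^ (1 - θ)) := by
                rw [gm_eq hθ.le h1θ.le (by ring)]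
            _ = (u ^ θ * I₁ ^ θ) * (u ^ (1 - θ) * I₂ ^ (1 - θ)) := by ring
            _ = (u * I₁) ^ θ * (u * I₂) ^ (1 - θ) := by
                rw [ENNReal.mul_rpow_of_nonneg _ _ hθ.le,
                  ENNReal.mul_rpow_of_nonneg _ _ h1θ.le]
      _ = ((u * I₁) ^ a⁻¹) ^ (θ * a / b) * ((u * I₂) ^ c⁻¹) ^ ((1 - θ) * c / b) := by
          rw [ENNReal.mul_rpow_of_nonneg _ _ (inv_nonneg.mpr hb.le),
            ← ENNReal.rpow_mul, ← ENNReal.rpow_mul, ← ENNReal.rpow_mul,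
            ← ENNReal.rpow_mul,
            show a⁻¹ * (θ * a / b) = θ * b⁻¹ by field_simp,
            show c⁻¹ * ((1 - θ) * c / b) = (1 - θ) * b⁻¹ by field_simp]

end Aux

section Aux2

variable {X : Type*} [MeasurableSpace X] {μ : Set X → ℝ≥0∞} {ν : Measure X}

lemma ellSize_le_outerSup (r : ℝ≥0∞) (f : X → ℝ≥0∞) {A : Set X} (hA : MeasurableSet A) :
    ellSize μ ν r f A ≤ outerSup μ ν r f :=
  le_iSup₂ (f := fun A (_ : MeasurableSet A) => ellSize μ ν r f A) A hA

lemma gm_le {θ₁ θ₂ : ℝ} (h1 : 0 ≤ θ₁) (h2 : 0 ≤ θ₂) (hs : θ₁ + θ₂ = 1)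
    {x y lam : ℝ≥0∞} (hx : x ≤ lam) (hy : y ≤ lam) : x ^ θ₁ * y ^ θ₂ ≤ lam :=
  calc x ^ θ₁ * y ^ θ₂ ≤ lam ^ θ₁ * lam ^ θ₂ :=
        mul_le_mul' (ENNReal.rpow_le_rpow hx h1) (ENNReal.rpow_le_rpow hy h2)
    _ = lam := gm_eq h1 h2 hs lam

/-- level bound: if `g ≤ f₁`, `g ≤ f₂` and the `r₁`-sup of `f₁` and the `r₂`-sup of `f₂`
are both `≤ lam`, then the `r`-sup of `g` is `≤ lam`. -/
lemma outerSup_interp_le {r₁ r r₂ : ℝ≥0∞} (hr₁ : 0 < r₁) (h₁ : r₁ < r) (h₂ : r < r₂)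
    {g f₁ f₂ : X → ℝ≥0∞} (hg : Measurable g) (hle1 : ∀ x, g x ≤ f₁ x)
    (hle2 : ∀ x, g x ≤ f₂ x) {lam : ℝ≥0∞}
    (hs1 : outerSup μ ν r₁ f₁ ≤ lam) (hs2 : outerSup μ ν r₂ f₂ ≤ lam) :
    outerSup μ ν r g ≤ lam := by
  obtain ⟨θ₁, θ₂, hθ₁, hθ₂, hθs, hint⟩ := ellSize_interp μ ν hr₁ h₁ h₂ hg
  refine iSup₂_le fun A hA => ?_
  refine (hint A).trans (gm_le hθ₁.le hθ₂.le hθs ?_ ?_)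
  · exact ((ellSize_mono μ ν r₁ hle1 A).trans (ellSize_le_outerSup r₁ f₁ hA)).trans hs1
  · exact ((ellSize_mono μ ν r₂ hle2 A).trans (ellSize_le_outerSup r₂ f₂ hA)).trans hs2

lemma superLevel_le {r : ℝ≥0∞} {f : X → ℝ≥0∞} {lam : ℝ≥0∞} {A : Set X}
    (hA : MeasurableSet A) (hc : outerSup μ ν r (Aᶜ.indicator f) ≤ lam) :
    superLevel μ ν r f lam ≤ μ A :=
  iInf_le_of_le A (iInf_le_of_le hA (iInf_le _ hc))

lemma mu_union (hμ0 : μ ∅ = 0) (hsub : ∀ s : ℕ → Set X, μ (⋃ n, s n) ≤ ∑' n, μ (s n))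
    (hmono : ∀ A B : Set X, A ⊆ B → μ A ≤ μ B) (A B : Set X) :
    μ (A ∪ B) ≤ μ A + μ B := by
  set s : ℕ → Set X := fun n => if n = 0 then A else if n = 1 then B else ∅ with hs
  have hU : A ∪ B ⊆ ⋃ n, s n := by
    apply union_subset
    · exact subset_iUnion_of_subset 0 (by simp [hs])
    · exact subset_iUnion_of_subset 1 (by simp [hs])
  have htsum : (∑' n, μ (s n)) = μ A + μ B := by
    rw [tsum_eq_sum (s := {0, 1})
      (fun n hn => by
        have h0 : n ≠ 0 := by simp at hn; exact hn.1
        have h1 : n ≠ 1 := by simp at hn; exact hn.2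
        simp [hs, h0, h1, hμ0])]
    simp [hs]
  exact (hmono _ _ hU).trans ((hsub s).trans htsum.le)

lemma superLevel_add {r₁ r r₂ : ℝ≥0∞} (hr₁ : 0 < r₁) (h₁ : r₁ < r) (h₂ : r < r₂)
    (hμ0 : μ ∅ = 0) (hmono : ∀ A B : Set X, A ⊆ B → μ A ≤ μ B)
    (hsub : ∀ s : ℕ → Set X, μ (⋃ n, s n) ≤ ∑' n, μ (s n))
    {f : X → ℝ≥0∞} (hf : Measurable f) (lam : ℝ≥0∞) :
    superLevel μ ν r f lam ≤ superLevel μ ν r₁ f lam + superLevel μ ν r₂ f lam := by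
  refine ENNReal.le_of_forall_pos_le_add fun ε hε hfin => ?_
  have hfin1 : superLevel μ ν r₁ f lam ≠ ∞ := (ENNReal.add_lt_top.mp hfin).1.ne
  have hfin2 : superLevel μ ν r₂ f lam ≠ ∞ := (ENNReal.add_lt_top.mp hfin).2.ne
  have hε2 : ((ε : ℝ≥0∞) / 2) ≠ 0 := by
    simp [ENNReal.div_eq_top, hε.ne']
  have h1 : superLevel μ ν r₁ f lam < superLevel μ ν r₁ f lam + ε / 2 :=
    ENNReal.lt_add_right hfin1 hε2
  have h2 : superLevel μ ν r₂ f lam < superLevel μ ν r₂ f lam + ε / 2 :=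
    ENNReal.lt_add_right hfin2 hε2
  rw [superLevel] at h1 h2
  simp only [iInf_lt_iff] at h1 h2
  obtain ⟨A₁, hA₁, hc₁, hμ₁⟩ := h1
  obtain ⟨A₂, hA₂, hc₂, hμ₂⟩ := h2
  have hcond : outerSup μ ν r ((A₁ ∪ A₂)ᶜ.indicator f) ≤ lam := by
    refine outerSup_interp_le hr₁ h₁ h₂ (hf.indicator (hA₁.union hA₂).compl)
      (fun x => ?_) (fun x => ?_) hc₁ hc₂
    · exact Set.indicator_le_indicator_of_subset
        (compl_subset_compl.mpr subset_union_left) (fun _ => zero_le) x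
    · exact Set.indicator_le_indicator_of_subset
        (compl_subset_compl.mpr subset_union_right) (fun _ => zero_le) x
  calc superLevel μ ν r f lam ≤ μ (A₁ ∪ A₂) := superLevel_le (hA₁.union hA₂) hcond
    _ ≤ μ A₁ + μ A₂ := mu_union hμ0 hsub hmono A₁ A₂
    _ ≤ (superLevel μ ν r₁ f lam + ε / 2) + (superLevel μ ν r₂ f lam + ε / 2) :=
        add_le_add hμ₁.le hμ₂.le
    _ = superLevel μ ν r₁ f lam + superLevel μ ν r₂ f lam + ε := by
        rw [show ∀ x y z : ℝ≥0∞, (x + z) + (y + z) = x + y + (z + z) from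
          fun x y z => by ring, ENNReal.add_halves]

lemma superLevel_anti {r : ℝ≥0∞} {f : X → ℝ≥0∞} :
    Antitone (superLevel μ ν r f) := by
  intro l l' h
  refine le_iInf fun A => le_iInf fun hA => le_iInf fun hc => ?_
  exact superLevel_le hA (hc.trans h)

lemma sum_rpow_le (x y : ℝ≥0∞) {q : ℝ} (hq : 0 ≤ q) :
    (x + y) ^ q ≤ 2 ^ q * (x ^ q + y ^ q) := by
  calc (x + y) ^ q ≤ (2 * (x ⊔ y)) ^ q := by
        refine ENNReal.rpow_le_rpow ?_ hq
        rw [two_mul]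
        exact add_le_add le_sup_left le_sup_right
    _ = 2 ^ q * (x ⊔ y) ^ q := ENNReal.mul_rpow_of_nonneg _ _ hq
    _ ≤ 2 ^ q * (x ^ q + y ^ q) := by
        gcongr
        rcases le_total x y with h | h
        · rw [sup_eq_right.mpr h]; exact le_add_self
        · rw [sup_eq_left.mpr h]; exact le_self_add

end Aux2

theorem log_convexity_outer_Lp {X : Type*} [MetricSpace X] [MeasurableSpace X]
    [BorelSpace X] (μ : Set X → ℝ≥0∞) (ν : Measure X)
    (hμ0 : μ ∅ = 0)
    (hmono : ∀ A B : Set X, A ⊆ B → μ A ≤ μ B)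
    (hsub : ∀ s : ℕ → Set X, μ (⋃ n, s n) ≤ ∑' n, μ (s n))
    (p r₁ r r₂ : ℝ≥0∞) (hp : 0 < p) (hr₁ : 0 < r₁) (h₁ : r₁ < r) (h₂ : r < r₂) :
    ∃ C : ℝ≥0∞, C ≠ ∞ ∧
      ∀ f : X → ℝ≥0∞, Measurable f →
        outerLp μ ν p r f ≤ C * (outerLp μ ν p r₁ f + outerLp μ ν p r₂ f) ∧
        outerLpWeak μ ν p r f ≤ C * (outerLpWeak μ ν p r₁ f + outerLpWeak μ ν p r₂ f) := by
  have hC1 : (1 : ℝ≥0∞) ≤ 2 ^ p.toReal⁻¹ := by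
    rw [← ENNReal.one_rpow p.toReal⁻¹]
    exact ENNReal.rpow_le_rpow one_le_two (inv_nonneg.mpr ENNReal.toReal_nonneg)
  refine ⟨2 ^ p.toReal⁻¹,
    ENNReal.rpow_ne_top_of_nonneg (inv_nonneg.mpr ENNReal.toReal_nonneg)
      (by norm_num), fun f hf => ?_⟩
  by_cases hptop : p = ∞
  · simp only [outerLp, outerLpWeak, if_pos hptop]
    have key : outerSup μ ν r f ≤ outerSup μ ν r₁ f + outerSup μ ν r₂ f := by
      obtain ⟨θ₁, θ₂, hθ₁, hθ₂, hθs, hint⟩ := ellSize_interp μ ν hr₁ h₁ h₂ hf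
      refine iSup₂_le fun A hA => (hint A).trans (gm_le hθ₁.le hθ₂.le hθs ?_ ?_)
      · exact (ellSize_le_outerSup r₁ f hA).trans le_self_add
      · exact (ellSize_le_outerSup r₂ f hA).trans le_add_self
    exact ⟨key.trans (le_mul_of_one_le_left zero_le hC1),
      key.trans (le_mul_of_one_le_left zero_le hC1)⟩
  · have hq : 0 ≤ p.toReal⁻¹ := inv_nonneg.mpr ENNReal.toReal_nonneg
    have hSL : ∀ lam, superLevel μ ν r f lam ≤
        superLevel μ ν r₁ f lam + superLevel μ ν r₂ f lam :=
      superLevel_add hr₁ h₁ h₂ hμ0 hmono hsub hf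
    simp only [outerLp, outerLpWeak, if_neg hptop]
    constructor
    · -- strong type
      have hwmeas : Measurable fun l : ℝ =>
          ENNReal.ofReal (p.toReal * l ^ (p.toReal - 1)) :=
        (measurable_const.mul (measurable_id.pow_const (p.toReal - 1))).ennreal_ofReal
      have hm1 : Measurable fun l : ℝ => superLevel μ ν r₁ f (ENNReal.ofReal l) :=
        Antitone.measurable
          (superLevel_anti.comp_monotone fun _ _ h => ENNReal.ofReal_le_ofReal h)
      calc (∫⁻ l in Ioi (0:ℝ), ENNReal.ofReal (p.toReal * l ^ (p.toReal - 1)) *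
              superLevel μ ν r f (ENNReal.ofReal l)) ^ p.toReal⁻¹
          ≤ ((∫⁻ l in Ioi (0:ℝ), ENNReal.ofReal (p.toReal * l ^ (p.toReal - 1)) *
              superLevel μ ν r₁ f (ENNReal.ofReal l)) +
             (∫⁻ l in Ioi (0:ℝ), ENNReal.ofReal (p.toReal * l ^ (p.toReal - 1)) *
              superLevel μ ν r₂ f (ENNReal.ofReal l))) ^ p.toReal⁻¹ := by
            refine ENNReal.rpow_le_rpow ?_ hq
            rw [← lintegral_add_left (f := fun l : ℝ =>
              ENNReal.ofReal (p.toReal * l ^ (p.toReal - 1)) * superLevel μ ν r₁ f (ENNReal.ofReal l))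
              (hwmeas.mul hm1)]
            refine lintegral_mono fun l => ?_
            rw [← mul_add]
            exact mul_le_mul_right (hSL _) _
        _ ≤ 2 ^ p.toReal⁻¹ *
            ((∫⁻ l in Ioi (0:ℝ), ENNReal.ofReal (p.toReal * l ^ (p.toReal - 1)) *
              superLevel μ ν r₁ f (ENNReal.ofReal l)) ^ p.toReal⁻¹ +
             (∫⁻ l in Ioi (0:ℝ), ENNReal.ofReal (p.toReal * l ^ (p.toReal - 1)) *
              superLevel μ ν r₂ f (ENNReal.ofReal l)) ^ p.toReal⁻¹) :=
            sum_rpow_le _ _ hq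
    · -- weak type
      calc (⨆ (lam : ℝ≥0∞) (_ : 0 < lam),
              lam ^ p.toReal * superLevel μ ν r f lam) ^ p.toReal⁻¹
          ≤ ((⨆ (lam : ℝ≥0∞) (_ : 0 < lam),
                lam ^ p.toReal * superLevel μ ν r₁ f lam) +
             (⨆ (lam : ℝ≥0∞) (_ : 0 < lam),
                lam ^ p.toReal * superLevel μ ν r₂ f lam)) ^ p.toReal⁻¹ := by
            refine ENNReal.rpow_le_rpow (iSup₂_le fun lam hlam => ?_) hq
            calc lam ^ p.toReal * superLevel μ ν r f lam
                ≤ lam ^ p.toReal *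
                  (superLevel μ ν r₁ f lam + superLevel μ ν r₂ f lam) :=
                  mul_le_mul_right (hSL lam) _
              _ = lam ^ p.toReal * superLevel μ ν r₁ f lam +
                  lam ^ p.toReal * superLevel μ ν r₂ f lam := mul_add _ _ _
              _ ≤ _ := add_le_add
                  (le_iSup₂ (f := fun lam (_ : 0 < lam) =>
                    lam ^ p.toReal * superLevel μ ν r₁ f lam) lam hlam)
                  (le_iSup₂ (f := fun lam (_ : 0 < lam) =>
                    lam ^ p.toReal * superLevel μ ν r₂ f lam) lam hlam)
        _ ≤ _ := sum_rpow_le _ _ hq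

end
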